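/- Fix a sign ε ∈ {+1, −1} and t ≥ 0. If (H, W) ∈ ℝ^{p×CN} ⊕ ℝ^{C×p} satisfies H = ε·(1/√N)·(W ⊗ 1_N)^⊤ and 1_C^⊤ W = 0, then L_t(H, W) := (W^⊤ M_t, M_t H^⊤) = ε√N·(H, W); i.e., the subspace E₁^ε is an eigenspace of L_t with eigenvalue ε√N. -/

import Mathlib

open Matrix

noncomputable section

/-- `β(t) = (1 - e^{-CNt})/C`. -/
def beta (C N : ℕ) (t : ℝ) : ℝ := (1 - Real.exp (-(C * N : ℝ) * t)) / C

/-- `M_t = (I_C ⊗ 1_Nᵀ) - β(t) 1_C 1_{CN}ᵀ ∈ ℝ^{C×CN}`, with the `CN` columns indexed by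
`Fin C × Fin N`. -/
def Mt (C N : ℕ) (t : ℝ) : Matrix (Fin C) (Fin C × Fin N) ℝ :=
  Matrix.of fun c cn => (if cn.1 = c then 1 else 0) - beta C N t

/-- Fix a sign `ε ∈ {+1, -1}` and `t ≥ 0`.  If
`H = ε (1/√N) (W ⊗ 1_N)ᵀ` and `1_Cᵀ W = 0`, then
`L_t(H, W) = (Wᵀ M_t, M_t Hᵀ) = ε √N (H, W)`; i.e. `E₁^ε` is an eigenspace of `L_t`
with eigenvalue `ε √N`. -/
theorem E1_eigenspace (C N p : ℕ) (hC : 0 < C) (hN : 0 < N) (hp : 0 < p)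
    (ε : ℝ) (hε : ε = 1 ∨ ε = -1) (t : ℝ) (ht : 0 ≤ t)
    (H : Matrix (Fin p) (Fin C × Fin N) ℝ) (W : Matrix (Fin C) (Fin p) ℝ)
    (hH : H = Matrix.of (fun j (cn : Fin C × Fin N) => ε * ((Real.sqrt N)⁻¹ * W cn.1 j)))
    (hW : ∀ j : Fin p, ∑ c : Fin C, W c j = 0) :
    Wᵀ * Mt C N t = (ε * Real.sqrt N) • H ∧
    Mt C N t * Hᵀ = (ε * Real.sqrt N) • W := by
  have hε2 : ε * ε = 1 := by rcases hε with h | h <;> simp [h]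
  have hsN : Real.sqrt N ≠ 0 := by
    positivity
  have hsq : Real.sqrt N * Real.sqrt N = N := Real.mul_self_sqrt (by positivity)
  constructor
  · ext j cn
    simp only [mul_apply, transpose_apply, Mt, beta, of_apply, Matrix.smul_apply, hH, smul_eq_mul]
    rw [Finset.sum_congr rfl (fun c _ => mul_sub (W c j) _ _)]
    rw [Finset.sum_sub_distrib]
    simp only [← Finset.sum_mul, hW j, zero_mul, sub_zero]
    rw [Finset.sum_mul_boole, if_pos (Finset.mem_univ _)]
    field_simp
    rcases hε with h | h <;> subst h <;> ring
  · ext c j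
    simp only [mul_apply, transpose_apply, Mt, beta, of_apply, Matrix.smul_apply, hH, smul_eq_mul,
      Fintype.sum_prod_type]
    have : ∀ c' : Fin C, ∑ _n : Fin N,
        ((if c' = c then (1:ℝ) else 0) - (1 - Real.exp (-(C * N : ℝ) * t)) / C) *
          (ε * ((Real.sqrt N)⁻¹ * W c' j))
        = (N : ℝ) * (((if c' = c then (1:ℝ) else 0) - (1 - Real.exp (-(C * N : ℝ) * t)) / C) *
          (ε * ((Real.sqrt N)⁻¹ * W c' j))) := by
      intro c'
      rw [Finset.sum_const, Finset.card_univ, Fintype.card_fin, nsmul_eq_mul]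
    rw [Finset.sum_congr rfl (fun c' _ => this c')]
    rw [← Finset.mul_sum]
    have key : ∑ c' : Fin C,
        ((if c' = c then (1:ℝ) else 0) - (1 - Real.exp (-(C * N : ℝ) * t)) / C) *
          (ε * ((Real.sqrt N)⁻¹ * W c' j))
        = ε * ((Real.sqrt N)⁻¹ * W c j) := by
      rw [Finset.sum_congr rfl (fun c' _ => sub_mul _ _ _), Finset.sum_sub_distrib]
      have h0 : ∑ c' : Fin C, (1 - Real.exp (-(C * N : ℝ) * t)) / C * (ε * ((Real.sqrt N)⁻¹ * W c' j))
          = 0 := by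
        simp only [← Finset.mul_sum, hW j, mul_zero]
      rw [h0, sub_zero]
      simp only [ite_mul, one_mul, zero_mul, Finset.sum_ite_eq' Finset.univ c
        (fun c' => ε * ((Real.sqrt N)⁻¹ * W c' j)), Finset.mem_univ, if_true]
    rw [key, show (N:ℝ) = Real.sqrt N * Real.sqrt N from hsq.symm]
    field_simp
    simp only [Real.sqrt_sq (Real.sqrt_nonneg _)]
    ring

end
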